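/- Fix an integer L ≥ 2 and let n = 2^L. Define the milestone sets M_k recursively: M_0 = {2^i : 0 ≤ i ≤ L}, and M_{j+1} is obtained from M_j by adding, for every pair of consecutive elements a < b of M_j with b − a ≥ 2, the midpoint (a+b)/2. Then for every k with 0 ≤ k ≤ L − 1, the set M_k has exactly 2^k · (L − k + 1) elements. -/

import Mathlib

/-- The milestone sets `M_k ⊆ [1, 2 ^ L]`: `M_0 = {2 ^ i : 0 ≤ i ≤ L}`, and `M_{j+1}` is
obtained from `M_j` by adding, for every pair of consecutive elements `a < b` of `M_j`
with `b − a ≥ 2`, the midpoint `(a + b) / 2` (an integer `c` with `a + b = 2 * c`). -/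
def milestones (L : ℕ) : ℕ → Finset ℕ
  | 0 => (Finset.range (L + 1)).image (fun i => 2 ^ i)
  | j + 1 =>
      milestones L j ∪
        (Finset.range (2 ^ L + 1)).filter (fun c =>
          ∃ a ∈ milestones L j, ∃ b ∈ milestones L j,
            a < b ∧ (∀ x ∈ milestones L j, ¬(a < x ∧ x < b)) ∧ 2 ≤ b - a ∧ a + b = 2 * c)

/-- Explicit description of the milestone sets: `[1, 2^k]` together with the dyadic
points `s * 2^e` for `2^k ≤ s ≤ 2^(k+1)` and `e < L - k`. -/
def Ek (L k : ℕ) : Finset ℕ :=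
  Finset.Icc 1 (2 ^ k) ∪
    (Finset.range (L - k)).biUnion
      (fun e => (Finset.Icc (2 ^ k) (2 ^ (k + 1))).image (fun s => s * 2 ^ e))

lemma mem_Ek {L k x : ℕ} :
    x ∈ Ek L k ↔ (1 ≤ x ∧ x ≤ 2 ^ k) ∨
      ∃ e, e + k + 1 ≤ L ∧ ∃ s, 2 ^ k ≤ s ∧ s ≤ 2 ^ (k + 1) ∧ x = s * 2 ^ e := by
  simp only [Ek, Finset.mem_union, Finset.mem_Icc, Finset.mem_biUnion, Finset.mem_range,
    Finset.mem_image]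
  constructor
  · rintro (h | ⟨e, he, s, ⟨hs1, hs2⟩, rfl⟩)
    · exact Or.inl h
    · exact Or.inr ⟨e, by omega, s, hs1, hs2, rfl⟩
  · rintro (h | ⟨e, he, s, hs1, hs2, rfl⟩)
    · exact Or.inl h
    · exact Or.inr ⟨e, by omega, s, ⟨hs1, hs2⟩, rfl⟩

lemma Ek_le {L k x : ℕ} (hk : k ≤ L) (hx : x ∈ Ek L k) : 1 ≤ x ∧ x ≤ 2 ^ L := by
  rcases mem_Ek.1 hx with ⟨h1, h2⟩ | ⟨e, he, s, hs1, hs2, rfl⟩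
  · exact ⟨h1, h2.trans (Nat.pow_le_pow_right (by norm_num) hk)⟩
  · constructor
    · have h1 : 1 ≤ 2 ^ k := Nat.one_le_two_pow
      have h2 : (1:ℕ) ≤ 2 ^ e := Nat.one_le_two_pow
      calc 1 = 1 * 1 := by ring
        _ ≤ s * 2 ^ e := Nat.mul_le_mul (by omega) h2
    · calc s * 2 ^ e ≤ 2 ^ (k + 1) * 2 ^ e := Nat.mul_le_mul_right _ hs2
        _ = 2 ^ (e + k + 1) := by ring
        _ ≤ 2 ^ L := Nat.pow_le_pow_right (by norm_num) he

lemma Icc_subset_Ek {L k x : ℕ} (hk : k + 1 ≤ L) (h1 : 1 ≤ x) (h2 : x ≤ 2 ^ (k + 1)) :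
    x ∈ Ek L k := by
  rcases le_or_gt x (2 ^ k) with h | h
  · exact mem_Ek.2 (Or.inl ⟨h1, h⟩)
  · exact mem_Ek.2 (Or.inr ⟨0, by omega, x, h.le, h2, by ring⟩)

/-- No element of `Ek L k` lies strictly between `t * 2 ^ f` and `(t + 1) * 2 ^ f`
when `2 ^ k ≤ t < 2 ^ (k + 1)` and `f ≥ 1`. -/
lemma no_between {L k t f y : ℕ} (ht1 : 2 ^ k ≤ t) (_ht2 : t < 2 ^ (k + 1))
    (hf : 1 ≤ f) (hy : y ∈ Ek L k) (h1 : t * 2 ^ f < y) (h2 : y < (t + 1) * 2 ^ f) :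
    False := by
  have hklow : 2 ^ (k + 1) ≤ t * 2 ^ f := by
    calc 2 ^ (k + 1) = 2 ^ k * 2 ^ 1 := by ring
      _ ≤ t * 2 ^ f := Nat.mul_le_mul ht1 (Nat.pow_le_pow_right (by norm_num) hf)
  have hygt : 2 ^ k < y := by
    have : 2 ^ k < 2 ^ (k + 1) := Nat.pow_lt_pow_right (by norm_num) (by omega)
    omega
  rcases mem_Ek.1 hy with ⟨_, h⟩ | ⟨e, he, s, hs1, hs2, rfl⟩
  · omega
  · -- show f ≤ e
    have hfe : f ≤ e := by
      by_contra hc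
      push_neg at hc
      have hyle : s * 2 ^ e ≤ 2 ^ (e + k + 1) := by
        calc s * 2 ^ e ≤ 2 ^ (k + 1) * 2 ^ e := Nat.mul_le_mul_right _ hs2
          _ = 2 ^ (e + k + 1) := by ring
      have hge : 2 ^ (f + k) ≤ t * 2 ^ f := by
        calc 2 ^ (f + k) = 2 ^ k * 2 ^ f := by ring
          _ ≤ t * 2 ^ f := Nat.mul_le_mul_right _ ht1
      have : 2 ^ (e + k + 1) ≤ 2 ^ (f + k) := Nat.pow_le_pow_right (by norm_num) (by omega)
      omega
    -- 2 ^ f divides y, contradiction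
    obtain ⟨d, rfl⟩ : ∃ d, e = f + d := ⟨e - f, by omega⟩
    have h1' : t < s * 2 ^ d := by
      have := Nat.lt_of_mul_lt_mul_right (a := 2 ^ f)
        (by calc t * 2 ^ f < s * 2 ^ (f + d) := h1
              _ = s * 2 ^ d * 2 ^ f := by ring)
      exact this
    have h2' : s * 2 ^ d < t + 1 := by
      have := Nat.lt_of_mul_lt_mul_right (a := 2 ^ f)
        (by calc s * 2 ^ d * 2 ^ f = s * 2 ^ (f + d) := by ring
              _ < (t + 1) * 2 ^ f := h2)
      exact this
    omega

lemma milestones_eq_Ek (L : ℕ) : ∀ k, k + 1 ≤ L → milestones L k = Ek L k := by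
  intro k
  induction k with
  | zero =>
    intro hL
    ext x
    simp only [milestones, Finset.mem_image, Finset.mem_range, mem_Ek]
    constructor
    · rintro ⟨i, hi, rfl⟩
      rcases Nat.eq_zero_or_pos i with rfl | hpos
      · exact Or.inl ⟨by norm_num, by norm_num⟩
      · obtain ⟨j, rfl⟩ : ∃ j, i = j + 1 := ⟨i - 1, by omega⟩
        exact Or.inr ⟨j, by omega, 2, by norm_num, by norm_num, by ring⟩
    · rintro (⟨h1, h2⟩ | ⟨e, he, s, hs1, hs2, rfl⟩)
      · exact ⟨0, by omega, by simp; omega⟩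
      · norm_num at hs1 hs2
        interval_cases s
        · exact ⟨e, by omega, by ring⟩
        · exact ⟨e + 1, by omega, by ring⟩
  | succ k ih =>
    intro hk1
    have hk : k + 1 ≤ L := by omega
    have hE : milestones L k = Ek L k := ih hk
    show milestones L k ∪ _ = Ek L (k + 1)
    rw [hE]
    ext x
    simp only [Finset.mem_union, Finset.mem_filter, Finset.mem_range, hE]
    constructor
    · rintro (hx | ⟨hxlt, a, ha, b, hb, hab, hbtw, hgap, hmid⟩)
      · -- `Ek L k ⊆ Ek L (k + 1)`
        rcases mem_Ek.1 hx with ⟨h1, h2⟩ | ⟨e, he, s, hs1, hs2, rfl⟩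
        · exact Icc_subset_Ek (by omega) h1 (by have := Nat.pow_le_pow_right (show 1 ≤ 2 by norm_num) (show k ≤ k + 1 by omega); omega)
        · rcases Nat.eq_zero_or_pos e with rfl | hepos
          · refine Icc_subset_Ek (by omega)
              (by have : (1:ℕ) ≤ 2 ^ k := Nat.one_le_two_pow; omega) ?_
            have h2 : (2:ℕ) ^ (k + 1) ≤ 2 ^ (k + 1 + 1) :=
              Nat.pow_le_pow_right (by norm_num) (by omega)
            simp only [pow_zero, mul_one]
            omega
          · refine mem_Ek.2 (Or.inr ⟨e - 1, by omega, 2 * s, ?_, ?_, ?_⟩)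
            · calc 2 ^ (k + 1) = 2 * 2 ^ k := by ring
                _ ≤ 2 * s := by omega
            · calc 2 * s ≤ 2 * 2 ^ (k + 1) := by omega
                _ = 2 ^ (k + 1 + 1) := by ring
            · have : e - 1 + 1 = e := by omega
              calc s * 2 ^ e = s * 2 ^ (e - 1 + 1) := by rw [this]
                _ = 2 * s * 2 ^ (e - 1) := by ring
      · -- midpoint of a consecutive pair lands in `Ek L (k + 1)`
        -- first: `a ≥ 2 ^ (k + 1)`
        have halow : 2 ^ (k + 1) ≤ a := by
          by_contra hc
          push_neg at hc
          have ha1 : 1 ≤ a := (Ek_le (by omega) ha).1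
          have : a + 1 ∈ Ek L k := Icc_subset_Ek hk (by omega) (by omega)
          exact hbtw _ this ⟨by omega, by omega⟩
        have hble : b ≤ 2 ^ L := (Ek_le (by omega) hb).2
        -- normalize a = t * 2 ^ f with 2^k ≤ t < 2^(k+1), 1 ≤ f, f + k + 1 ≤ L
        obtain ⟨t, f, ht1, ht2, hf1, hfk, hat⟩ :
            ∃ t f, 2 ^ k ≤ t ∧ t < 2 ^ (k + 1) ∧ 1 ≤ f ∧ f + k + 1 ≤ L ∧ a = t * 2 ^ f := by
          rcases mem_Ek.1 ha with ⟨_, h2⟩ | ⟨e, he, s, hs1, hs2, rfl⟩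
          · exfalso
            have : 2 ^ k < 2 ^ (k + 1) := Nat.pow_lt_pow_right (by norm_num) (by omega)
            omega
          · rcases eq_or_lt_of_le hs2 with rfl | hslt
            · -- s = 2 ^ (k+1): shift exponent
              have heL : e + k + 2 ≤ L := by
                by_contra hc
                push_neg at hc
                have : (2 ^ (k + 1) : ℕ) * 2 ^ e = 2 ^ L := by
                  have he' : e + k + 1 = L := by omega
                  calc (2 ^ (k+1) : ℕ) * 2 ^ e = 2 ^ (e + k + 1) := by ring
                    _ = 2 ^ L := by rw [he']
                omega
              refine ⟨2 ^ k, e + 1, le_refl _, Nat.pow_lt_pow_right (by norm_num) (by omega),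
                by omega, by omega, by ring⟩
            · have hepos : 1 ≤ e := by
                by_contra hc
                push_neg at hc
                have : e = 0 := by omega
                subst this
                simp at halow
                omega
              exact ⟨s, e, hs1, hslt, hepos, by omega, rfl⟩
        -- then b = (t + 1) * 2 ^ f
        have hbIn : (t + 1) * 2 ^ f ∈ Ek L k :=
          mem_Ek.2 (Or.inr ⟨f, by omega, t + 1, by omega, by omega, by ring⟩)
        have haltb' : a < (t + 1) * 2 ^ f := by
          rw [hat]
          exact (Nat.mul_lt_mul_right (show 0 < 2 ^ f from Nat.pow_pos (by norm_num))).2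
            (by omega)
        have hbeq : b = (t + 1) * 2 ^ f := by
          rcases lt_trichotomy b ((t + 1) * 2 ^ f) with h | h | h
          · exact absurd (no_between ht1 ht2 hf1 hb (hat ▸ hab) h) (fun h => h)
          · exact h
          · exact absurd (hbtw _ hbIn ⟨haltb', h⟩) (fun h => h)
        -- compute the midpoint
        have hxval : x = (2 * t + 1) * 2 ^ (f - 1) := by
          have hf' : f - 1 + 1 = f := by omega
          have h2f : (2:ℕ) ^ f = 2 * 2 ^ (f - 1) := by
            calc (2:ℕ) ^ f = 2 ^ (f - 1 + 1) := by rw [hf']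
              _ = 2 * 2 ^ (f - 1) := by ring
          have : 2 * x = 2 * ((2 * t + 1) * 2 ^ (f - 1)) := by
            rw [← hmid, hat, hbeq, h2f]; ring
          omega
        refine mem_Ek.2 (Or.inr ⟨f - 1, by omega, 2 * t + 1, ?_, ?_, hxval⟩)
        · calc 2 ^ (k + 1) = 2 * 2 ^ k := by ring
            _ ≤ 2 * t + 1 := by omega
        · calc 2 * t + 1 ≤ 2 * 2 ^ (k + 1) := by omega
            _ = 2 ^ (k + 1 + 1) := by ring
    · -- `Ek L (k + 1) ⊆ milestones L k ∪ midpoints`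
      intro hx
      rcases mem_Ek.1 hx with ⟨h1, h2⟩ | ⟨e, he, s, hs1, hs2, rfl⟩
      · exact Or.inl (Icc_subset_Ek hk h1 h2)
      · rcases Nat.even_or_odd s with ⟨t, rfl⟩ | ⟨t, rfl⟩
        · -- even: already in Ek L k
          refine Or.inl (mem_Ek.2 (Or.inr ⟨e + 1, by omega, t, ?_, ?_, ?_⟩))
          · have : 2 ^ (k + 1) = 2 * 2 ^ k := by ring
            omega
          · have : 2 ^ (k + 1 + 1) = 2 * 2 ^ (k + 1) := by ring
            omega
          · calc (t + t) * 2 ^ e = t * 2 ^ (e + 1) := by ring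
              _ = t * 2 ^ (e + 1) := rfl
        · -- odd: midpoint of (t * 2^(e+1), (t+1) * 2^(e+1))
          have ht1 : 2 ^ k ≤ t := by
            have : 2 ^ (k + 1) = 2 * 2 ^ k := by ring
            omega
          have ht2 : t < 2 ^ (k + 1) := by
            have : 2 ^ (k + 1 + 1) = 2 * 2 ^ (k + 1) := by ring
            omega
          refine Or.inr ⟨?_, t * 2 ^ (e + 1), ?_, (t + 1) * 2 ^ (e + 1), ?_, ?_, ?_, ?_, ?_⟩
          · have := (Ek_le (L := L) (k := k + 1) (by omega) hx).2
            omega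
          · exact mem_Ek.2 (Or.inr ⟨e + 1, by omega, t, ht1, by omega, rfl⟩)
          · exact mem_Ek.2 (Or.inr ⟨e + 1, by omega, t + 1, by omega, by omega, rfl⟩)
          · exact (Nat.mul_lt_mul_right
              (show 0 < 2 ^ (e + 1) from Nat.pow_pos (by norm_num))).2 (by omega)
          · intro y hy ⟨hy1, hy2⟩
            exact no_between ht1 ht2 (by omega) hy hy1 hy2
          · have h2e : (2:ℕ) ≤ 2 ^ (e + 1) := by
              calc (2:ℕ) = 2 ^ 1 := by norm_num
                _ ≤ 2 ^ (e + 1) := Nat.pow_le_pow_right (by norm_num) (by omega)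
            have : (t + 1) * 2 ^ (e + 1) - t * 2 ^ (e + 1) = 2 ^ (e + 1) := by
              rw [Nat.add_mul]; omega
            omega
          · ring

lemma Ek_card (L k : ℕ) (hk : k + 1 ≤ L) :
    (Ek L k).card = 2 ^ k * (L - k + 1) := by
  -- rewrite as a disjoint union using half-open intervals
  have hEq : Ek L k = Finset.Icc 1 (2 ^ k) ∪
      (Finset.range (L - k)).biUnion
        (fun e => (Finset.Ioc (2 ^ k) (2 ^ (k + 1))).image (fun s => s * 2 ^ e)) := by
    ext x
    simp only [Finset.mem_union, Finset.mem_Icc, Finset.mem_biUnion, Finset.mem_range,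
      Finset.mem_image, Finset.mem_Ioc]
    rw [show (x ∈ Ek L k) ↔ _ from mem_Ek]
    constructor
    · rintro (h | ⟨e, he, s, hs1, hs2, rfl⟩)
      · exact Or.inl h
      · rcases eq_or_lt_of_le hs1 with rfl | hslt
        · -- s = 2 ^ k
          rcases Nat.eq_zero_or_pos e with rfl | hepos
          · exact Or.inl ⟨by simpa using (Nat.one_le_two_pow : (1:ℕ) ≤ 2 ^ k), by simp⟩
          · refine Or.inr ⟨e - 1, by omega, 2 ^ (k + 1),
              ⟨Nat.pow_lt_pow_right (by norm_num) (by omega), le_refl _⟩, ?_⟩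
            obtain ⟨d, rfl⟩ : ∃ d, e = d + 1 := ⟨e - 1, by omega⟩
            simp only [Nat.add_sub_cancel]
            ring
        · exact Or.inr ⟨e, by omega, s, ⟨hslt, hs2⟩, rfl⟩
    · rintro (h | ⟨e, he, s, ⟨hs1, hs2⟩, rfl⟩)
      · exact Or.inl h
      · exact Or.inr ⟨e, by omega, s, by omega, hs2, rfl⟩
  rw [hEq]
  have hpow : (2:ℕ) ^ k < 2 ^ (k + 1) := Nat.pow_lt_pow_right (by norm_num) (by omega)
  -- disjointness of the two parts
  have hdisj : Disjoint (Finset.Icc 1 (2 ^ k))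
      ((Finset.range (L - k)).biUnion
        (fun e => (Finset.Ioc (2 ^ k) (2 ^ (k + 1))).image (fun s => s * 2 ^ e))) := by
    rw [Finset.disjoint_left]
    intro y hy hy'
    simp only [Finset.mem_Icc] at hy
    simp only [Finset.mem_biUnion, Finset.mem_range, Finset.mem_image, Finset.mem_Ioc] at hy'
    obtain ⟨e, _, s, ⟨hs1, _⟩, rfl⟩ := hy'
    have h1 : (1:ℕ) ≤ 2 ^ e := Nat.one_le_two_pow
    have : 2 ^ k < s * 2 ^ e := by
      calc 2 ^ k < s := hs1
        _ = s * 1 := by ring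
        _ ≤ s * 2 ^ e := Nat.mul_le_mul_left _ h1
    omega
  rw [Finset.card_union_of_disjoint hdisj]
  rw [Finset.card_biUnion]
  · have hcard1 : (Finset.Icc 1 (2 ^ k)).card = 2 ^ k := by
      rw [Nat.card_Icc]; omega
    have hcard2 : ∀ e ∈ Finset.range (L - k),
        ((Finset.Ioc (2 ^ k) (2 ^ (k + 1))).image (fun s => s * 2 ^ e)).card = 2 ^ k := by
      intro e _
      rw [Finset.card_image_of_injective _ (fun a b h => by
        have hp : (0:ℕ) < 2 ^ e := Nat.pow_pos (by norm_num)
        exact Nat.eq_of_mul_eq_mul_right hp h)]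
      rw [Nat.card_Ioc]
      have : (2:ℕ) ^ (k + 1) = 2 * 2 ^ k := by ring
      omega
    rw [Finset.sum_congr rfl hcard2, Finset.sum_const, Finset.card_range, hcard1,
      smul_eq_mul]
    ring
  · -- pairwise disjointness of the dyadic layers
    intro e he f hf hef
    rw [Function.onFun, Finset.disjoint_left]
    intro y hy hy'
    simp only [Finset.mem_image, Finset.mem_Ioc] at hy hy'
    obtain ⟨s, ⟨hs1, hs2⟩, rfl⟩ := hy
    obtain ⟨u, ⟨hu1, hu2⟩, huv⟩ := hy'
    -- s * 2 ^ e ∈ (2^(k+e), 2^(k+e+1)], similarly for u; forces e = f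
    apply hef
    have hbounds : ∀ (m : ℕ) (v : ℕ), 2 ^ k < v → v ≤ 2 ^ (k + 1) →
        2 ^ (k + m) < v * 2 ^ m ∧ v * 2 ^ m ≤ 2 ^ (k + m + 1) := by
      intro m v h1 h2
      constructor
      · calc 2 ^ (k + m) = 2 ^ k * 2 ^ m := by ring
          _ < v * 2 ^ m := (Nat.mul_lt_mul_right (Nat.pow_pos (by norm_num))).2 h1
      · calc v * 2 ^ m ≤ 2 ^ (k + 1) * 2 ^ m := Nat.mul_le_mul_right _ h2
          _ = 2 ^ (k + m + 1) := by ring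
    obtain ⟨hL1, hL2⟩ := hbounds e s hs1 hs2
    obtain ⟨hM1, hM2⟩ := hbounds f u hu1 hu2
    rw [huv] at hM1 hM2
    by_contra hne
    rcases Nat.lt_or_ge e f with h | h
    · have : 2 ^ (k + e + 1) ≤ 2 ^ (k + f) := Nat.pow_le_pow_right (by norm_num) (by omega)
      omega
    · have hlt : f < e := by omega
      have : 2 ^ (k + f + 1) ≤ 2 ^ (k + e) := Nat.pow_le_pow_right (by norm_num) (by omega)
      omega

/-- **Cardinality of the milestone sets.** For `L ≥ 2` and every `k` with
`0 ≤ k ≤ L − 1`, the milestone set `M_k` has exactly `2 ^ k * (L − k + 1)` elements. -/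
theorem milestones_card (L : ℕ) (hL : 2 ≤ L) (k : ℕ) (hk : k ≤ L - 1) :
    (milestones L k).card = 2 ^ k * (L - k + 1) := by
  have hk1 : k + 1 ≤ L := by omega
  rw [milestones_eq_Ek L k hk1, Ek_card L k hk1]
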